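/- Let Θ ⊆ ℝⁿ be nonempty, closed and convex, let F : ℝⁿ → ℝ be M-Lipschitz continuous, and let ξ > 0. Define 𝐅̂(θ) := ∫ F(θ + ξν) dμ(ν) + (1/(2ξ)) dist²(θ, Θ). Then 𝐅̂ is differentiable, and if ∇𝐅̂(θ) = 0 at some θ ∈ ℝⁿ, then ‖θ − Π_Θ(θ)‖ ≤ ξ n M. -/

import Mathlib

open MeasureTheory

/-- The uniform probability measure on the closed unit ball of `ℝⁿ`. -/
noncomputable def ballUniform (n : ℕ) : Measure (EuclideanSpace ℝ (Fin n)) :=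
  (volume (Metric.closedBall (0 : EuclideanSpace ℝ (Fin n)) 1))⁻¹ •
    volume.restrict (Metric.closedBall (0 : EuclideanSpace ℝ (Fin n)) 1)

open Metric Set Filter
open scoped RealInnerProductSpace

set_option maxHeartbeats 1000000

section aux

variable {n : ℕ}

local notation "E" => EuclideanSpace ℝ (Fin n)

lemma ballUniform_closedBall_ne_zero :
    volume (Metric.closedBall (0 : E) 1) ≠ 0 :=
  ((measure_ball_pos volume (0 : E) one_pos).trans_le
    (measure_mono Metric.ball_subset_closedBall)).ne'

lemma ballUniform_closedBall_ne_top :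
    volume (Metric.closedBall (0 : E) 1) ≠ ⊤ :=
  ((isCompact_closedBall (0 : E) 1).measure_lt_top).ne

instance ballUniform_isProbabilityMeasure : IsProbabilityMeasure (ballUniform n) := by
  constructor
  rw [ballUniform]
  simp only [Measure.smul_apply, Measure.restrict_apply MeasurableSet.univ,
    Set.univ_inter, smul_eq_mul]
  exact ENNReal.inv_mul_cancel ballUniform_closedBall_ne_zero ballUniform_closedBall_ne_top

lemma integrable_ballUniform {f : E → ℝ} (hf : Continuous f) :
    Integrable f (ballUniform n) := by
  rw [ballUniform]
  refine Integrable.smul_measure ?_ (by simp [ballUniform_closedBall_ne_zero])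
  exact hf.continuousOn.integrableOn_compact (isCompact_closedBall (0 : E) 1)

lemma ae_ballUniform_of_ae_volume {p : E → Prop}
    (h : ∀ᵐ x ∂(volume : Measure E), p x) : ∀ᵐ x ∂(ballUniform n), p x := by
  rw [ballUniform]
  exact Measure.ae_smul_measure (ae_restrict_of_ae h) _

/-- a.e. differentiability pulled back through the affine map `ν ↦ θ + ξ • ν`. -/
lemma ae_differentiableAt_shift {F : E → ℝ} {C : NNReal} (hLip : LipschitzWith C F)
    {ξ : ℝ} (hξ : ξ ≠ 0) (θ : E) :
    ∀ᵐ ν ∂(ballUniform n), DifferentiableAt ℝ F (θ + ξ • ν) := by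
  refine ae_ballUniform_of_ae_volume ?_
  have h0 : ∀ᵐ x ∂(volume : Measure E), DifferentiableAt ℝ F x := hLip.ae_differentiableAt
  have q1 : Measure.QuasiMeasurePreserving (fun ν : E => ξ • ν) volume volume :=
    Measure.quasiMeasurePreserving_smul volume hξ
  have q2 : Measure.QuasiMeasurePreserving (fun x : E => θ + x) volume volume :=
    (measurePreserving_add_left volume θ).quasiMeasurePreserving
  exact (q2.comp q1).ae h0

/-- Differentiation under the integral for the ball-smoothed function, with gradient bound. -/
lemma hasFDerivAt_smoothed {F : E → ℝ} {M : ℝ} (hM : 0 ≤ M)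
    (hLip : LipschitzWith M.toNNReal F) {ξ : ℝ} (hξ : 0 < ξ) (θ : E) :
    HasFDerivAt (fun θ' => ∫ ν, F (θ' + ξ • ν) ∂(ballUniform n))
      (∫ ν, fderiv ℝ F (θ + ξ • ν) ∂(ballUniform n)) θ ∧
    ‖∫ ν, fderiv ℝ F (θ + ξ • ν) ∂(ballUniform n)‖ ≤ M := by
  have hFc : Continuous F := hLip.continuous
  have hnorm_fderiv : ∀ y : E, ‖fderiv ℝ F y‖ ≤ M := by
    intro y
    have := norm_fderiv_le_of_lipschitz ℝ hLip (x₀ := y)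
    rwa [Real.coe_toNNReal M hM] at this
  have key := hasFDerivAt_integral_of_dominated_loc_of_lip
    (μ := ballUniform n) (x₀ := θ)
    (F := fun x ν => F (x + ξ • ν)) (F' := fun ν => fderiv ℝ F (θ + ξ • ν))
    (bound := fun _ => M) (s := Metric.ball θ 1) (Metric.ball_mem_nhds θ one_pos)
    (Eventually.of_forall fun x =>
      (hFc.comp (continuous_const.add (continuous_const_smul ξ))).aestronglyMeasurable)
    (integrable_ballUniform (hFc.comp (continuous_const.add (continuous_const_smul ξ))))
    (((measurable_fderiv ℝ F).comp
      ((measurable_id.const_smul ξ).const_add θ)).aestronglyMeasurable)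
    (Eventually.of_forall fun ν => by
      have hl : LipschitzWith (Real.nnabs M) (fun x : E => F (x + ξ • ν)) := by
        refine LipschitzWith.of_dist_le_mul fun a b => ?_
        have h1 := hLip.dist_le_mul (a + ξ • ν) (b + ξ • ν)
        have h2 : dist (a + ξ • ν) (b + ξ • ν) = dist a b := by
          simp [dist_eq_norm]
        rw [h2] at h1
        refine h1.trans ?_
        have h3 : (M.toNNReal : ℝ) ≤ (Real.nnabs M : ℝ) := by
          rw [Real.coe_toNNReal M hM, Real.coe_nnabs, abs_of_nonneg hM]
        exact mul_le_mul_of_nonneg_right h3 dist_nonneg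
      exact hl.lipschitzOnWith)
    (integrable_const M)
    (by
      filter_upwards [ae_differentiableAt_shift hLip hξ.ne' θ] with ν hν
      have h1 : HasFDerivAt (fun x : E => x + ξ • ν) (ContinuousLinearMap.id ℝ E) θ :=
        (hasFDerivAt_id θ).add_const _
      have h2 := (hν.hasFDerivAt).comp θ h1
      simpa [Function.comp_def] using h2)
  refine ⟨key.2, ?_⟩
  have := norm_integral_le_of_norm_le_const
    (μ := ballUniform n) (f := fun ν => fderiv ℝ F (θ + ξ • ν)) (C := M)
    (Eventually.of_forall fun ν => hnorm_fderiv _)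
  simpa using this

end aux

section proj

variable {n : ℕ} {Θ : Set (EuclideanSpace ℝ (Fin n))}
  {proj : EuclideanSpace ℝ (Fin n) → EuclideanSpace ℝ (Fin n)}

local notation "E" => EuclideanSpace ℝ (Fin n)

lemma infDist_eq_proj (hproj : ∀ z, proj z ∈ Θ ∧ ∀ y ∈ Θ, ‖z - proj z‖ ≤ ‖z - y‖) (z : E) :
    Metric.infDist z Θ = ‖z - proj z‖ := by
  haveI : Nonempty Θ := ⟨⟨proj z, (hproj z).1⟩⟩
  refine le_antisymm (by simpa [dist_eq_norm] using Metric.infDist_le_dist_of_mem (hproj z).1) ?_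
  rw [Metric.infDist_eq_iInf]
  exact le_ciInf fun w => by simpa [dist_eq_norm] using (hproj z).2 w w.2

lemma proj_inner_le (hΘcv : Convex ℝ Θ)
    (hproj : ∀ z, proj z ∈ Θ ∧ ∀ y ∈ Θ, ‖z - proj z‖ ≤ ‖z - y‖) (z : E) :
    ∀ y ∈ Θ, ⟪z - proj z, y - proj z⟫ ≤ 0 := by
  haveI : Nonempty Θ := ⟨⟨proj z, (hproj z).1⟩⟩
  refine (norm_eq_iInf_iff_real_inner_le_zero hΘcv (hproj z).1).1 ?_
  refine le_antisymm (le_ciInf fun w => (hproj z).2 w w.2) ?_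
  have hbdd : BddBelow (Set.range fun w : Θ => ‖z - (w : EuclideanSpace ℝ (Fin n))‖) := by
    refine ⟨0, ?_⟩
    rintro r ⟨w, rfl⟩
    exact norm_nonneg _
  exact ciInf_le hbdd (⟨proj z, (hproj z).1⟩ : Θ)

lemma proj_nonexpansive (hΘcv : Convex ℝ Θ)
    (hproj : ∀ z, proj z ∈ Θ ∧ ∀ y ∈ Θ, ‖z - proj z‖ ≤ ‖z - y‖) (a b : E) :
    ‖proj a - proj b‖ ≤ ‖a - b‖ := by
  have h1 : ⟪a - proj a, proj b - proj a⟫ ≤ 0 :=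
    proj_inner_le hΘcv hproj a _ (hproj b).1
  have h2 : ⟪b - proj b, proj a - proj b⟫ ≤ 0 :=
    proj_inner_le hΘcv hproj b _ (hproj a).1
  have key : ‖proj a - proj b‖ ^ 2 ≤ ⟪a - b, proj a - proj b⟫ := by
    set w : E := proj a - proj b with hw
    have e1 : ⟪a - b, w⟫ - ⟪w, w⟫ = ⟪a - proj a, w⟫ - ⟪b - proj b, w⟫ := by
      rw [← inner_sub_left, ← inner_sub_left]
      congr 1
      rw [hw]; abel
    have e2 : (0:ℝ) ≤ ⟪a - proj a, w⟫ := by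
      have hww : w = -(proj b - proj a) := by rw [hw]; abel
      rw [hww, inner_neg_right]
      linarith
    have e3 : ⟪b - proj b, w⟫ ≤ 0 := h2
    have e4 : ⟪w, w⟫ = ‖w‖ ^ 2 := real_inner_self_eq_norm_sq w
    linarith
  have hcs : ⟪a - b, proj a - proj b⟫ ≤ ‖a - b‖ * ‖proj a - proj b‖ := real_inner_le_norm _ _
  by_cases h : ‖proj a - proj b‖ = 0
  · rw [h]; exact norm_nonneg _
  · have hpos : 0 < ‖proj a - proj b‖ := lt_of_le_of_ne (norm_nonneg _) (Ne.symm h)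
    nlinarith

lemma hasFDerivAt_infDist_sq (hΘcv : Convex ℝ Θ)
    (hproj : ∀ z, proj z ∈ Θ ∧ ∀ y ∈ Θ, ‖z - proj z‖ ≤ ‖z - y‖) (θ : E) :
    HasFDerivAt (fun θ' => Metric.infDist θ' Θ ^ 2)
      ((InnerProductSpace.toDual ℝ (EuclideanSpace ℝ (Fin n))) ((2:ℝ) • (θ - proj θ))) θ := by
  haveI : Nonempty Θ := ⟨⟨proj θ, (hproj θ).1⟩⟩
  rw [hasFDerivAt_iff_isLittleO_nhds_zero]
  have key : ∀ h : E,
      |Metric.infDist (θ + h) Θ ^ 2 - Metric.infDist θ Θ ^ 2 - 2 * ⟪θ - proj θ, h⟫|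
        ≤ ‖h‖ ^ 2 := by
    intro h
    set u : E := θ - proj θ with hu
    set v : E := θ + h - proj (θ + h) with hv
    have hgθ : Metric.infDist θ Θ = ‖u‖ := infDist_eq_proj hproj θ
    have hgθh : Metric.infDist (θ + h) Θ = ‖v‖ := infDist_eq_proj hproj (θ + h)
    -- upper bound
    have hup : Metric.infDist (θ + h) Θ ^ 2 ≤ ‖u‖ ^ 2 + 2 * ⟪u, h⟫ + ‖h‖ ^ 2 := by
      have h1 : Metric.infDist (θ + h) Θ ≤ ‖u + h‖ := by
        have := Metric.infDist_le_dist_of_mem (s := Θ) (x := θ + h) (hproj θ).1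
        rwa [dist_eq_norm, show θ + h - proj θ = u + h by rw [hu]; abel] at this
      have h2 : Metric.infDist (θ + h) Θ ^ 2 ≤ ‖u + h‖ ^ 2 :=
        pow_le_pow_left₀ Metric.infDist_nonneg h1 2
      calc Metric.infDist (θ + h) Θ ^ 2 ≤ ‖u + h‖ ^ 2 := h2
        _ = ‖u‖ ^ 2 + 2 * ⟪u, h⟫ + ‖h‖ ^ 2 := norm_add_sq_real u h
    -- lower bound
    have hlow : Metric.infDist (θ + h) Θ ^ 2 ≥ ‖u‖ ^ 2 + 2 * ⟪u, h⟫ - ‖h‖ ^ 2 := by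
      have h3 : ‖u‖ ≤ ‖θ - proj (θ + h)‖ := (hproj θ).2 _ (hproj (θ + h)).1
      have h3' : ‖u‖ ^ 2 ≤ ‖θ - proj (θ + h)‖ ^ 2 := pow_le_pow_left₀ (norm_nonneg _) h3 2
      have h4 : ‖θ - proj (θ + h)‖ ^ 2 = ‖v‖ ^ 2 - 2 * ⟪v, h⟫ + ‖h‖ ^ 2 := by
        have : (θ - proj (θ + h) : E) = v - h := by rw [hv]; abel
        rw [this, norm_sub_sq_real]
      have h5 : ⟪v, h⟫ = ⟪u, h⟫ + ⟪h, h⟫ + ⟪proj θ - proj (θ + h), h⟫ := by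
        have : (v : E) = u + h + (proj θ - proj (θ + h)) := by rw [hv, hu]; abel
        rw [this, inner_add_left, inner_add_left]
      have h6 : -(‖h‖ ^ 2) ≤ ⟪proj θ - proj (θ + h), h⟫ := by
        have hcs := abs_real_inner_le_norm (proj θ - proj (θ + h)) h
        have hne : ‖proj θ - proj (θ + h)‖ ≤ ‖h‖ := by
          have := proj_nonexpansive hΘcv hproj θ (θ + h)
          rwa [show (θ - (θ + h) : E) = -h by abel, norm_neg] at this
        have : |⟪proj θ - proj (θ + h), h⟫| ≤ ‖h‖ * ‖h‖ :=
          hcs.trans (mul_le_mul_of_nonneg_right hne (norm_nonneg _))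
        have := neg_abs_le ⟪proj θ - proj (θ + h), h⟫
        nlinarith [sq_nonneg ‖h‖]
      have h7 : ⟪h, h⟫ = ‖h‖ ^ 2 := real_inner_self_eq_norm_sq h
      rw [hgθh]
      nlinarith
    rw [hgθ]
    rw [abs_le]
    constructor <;> nlinarith
  have hbig : (fun h : E =>
      Metric.infDist (θ + h) Θ ^ 2 - Metric.infDist θ Θ ^ 2
        - (InnerProductSpace.toDual ℝ (EuclideanSpace ℝ (Fin n))) ((2:ℝ) • (θ - proj θ)) h)
      =O[nhds 0] fun h : E => ‖h‖ ^ 2 := by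
    refine Asymptotics.IsBigO.of_bound 1 (Eventually.of_forall fun h => ?_)
    have hk := key h
    rw [InnerProductSpace.toDual_apply_apply, real_inner_smul_left]
    simp only [one_mul, Real.norm_eq_abs]
    rw [abs_of_nonneg (by positivity : (0:ℝ) ≤ ‖h‖ ^ 2)]
    exact hk
  have hlittle : (fun h : E => ‖h‖ ^ 2) =o[nhds 0] fun h : E => h := by
    rw [Asymptotics.isLittleO_iff]
    intro c hc
    filter_upwards [Metric.ball_mem_nhds (0 : E) hc] with h hh
    rw [mem_ball, dist_zero_right] at hh
    rw [Real.norm_eq_abs, abs_of_nonneg (by positivity : (0:ℝ) ≤ ‖h‖ ^ 2)]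
    nlinarith [norm_nonneg h]
  exact hbig.trans_isLittleO hlittle

end proj

/-- Let `Θ ⊆ ℝⁿ` be nonempty closed convex, `F` an `M`-Lipschitz function, `ξ > 0`, and
`𝐅̂(θ) = ∫ F(θ + ξν) dμ(ν) + (1/(2ξ)) dist²(θ, Θ)` the smoothed objective (μ uniform on
the unit ball). Then `𝐅̂` is differentiable, and any stationary point `θ` of `𝐅̂`
satisfies `‖θ − Π_Θ(θ)‖ ≤ ξnM`, where `Π_Θ` is the metric projection onto `Θ`. -/
theorem stationary_point_near_feasible_set (n : ℕ)
    (Θ : Set (EuclideanSpace ℝ (Fin n)))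
    (hΘne : Θ.Nonempty) (hΘcl : IsClosed Θ) (hΘcv : Convex ℝ Θ)
    (F : EuclideanSpace ℝ (Fin n) → ℝ) (M : ℝ) (hM : 0 ≤ M)
    (hF : ∀ a b, |F a - F b| ≤ M * ‖a - b‖)
    (ξ : ℝ) (hξ : 0 < ξ)
    (proj : EuclideanSpace ℝ (Fin n) → EuclideanSpace ℝ (Fin n))
    (hproj : ∀ z, proj z ∈ Θ ∧ ∀ y ∈ Θ, ‖z - proj z‖ ≤ ‖z - y‖) :
    (Differentiable ℝ (fun θ =>
      (∫ ν, F (θ + ξ • ν) ∂(ballUniform n)) + 1 / (2 * ξ) * Metric.infDist θ Θ ^ 2)) ∧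
    ∀ θ : EuclideanSpace ℝ (Fin n),
      gradient (fun θ' =>
        (∫ ν, F (θ' + ξ • ν) ∂(ballUniform n)) + 1 / (2 * ξ) * Metric.infDist θ' Θ ^ 2) θ = 0 →
      ‖θ - proj θ‖ ≤ ξ * n * M := by
  have hLip : LipschitzWith M.toNNReal F := by
    refine LipschitzWith.of_dist_le_mul fun a b => ?_
    rw [Real.coe_toNNReal M hM, Real.dist_eq, dist_eq_norm]
    exact hF a b
  -- the total derivative at each point
  have htot : ∀ θ : EuclideanSpace ℝ (Fin n),
      HasFDerivAt (fun θ' =>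
        (∫ ν, F (θ' + ξ • ν) ∂(ballUniform n)) + 1 / (2 * ξ) * Metric.infDist θ' Θ ^ 2)
        ((∫ ν, fderiv ℝ F (θ + ξ • ν) ∂(ballUniform n)) +
          (1 / (2 * ξ)) • ((InnerProductSpace.toDual ℝ (EuclideanSpace ℝ (Fin n)))
            ((2:ℝ) • (θ - proj θ)))) θ := by
    intro θ
    exact ((hasFDerivAt_smoothed hM hLip hξ θ).1).add
      ((hasFDerivAt_infDist_sq hΘcv hproj θ).const_mul (1 / (2 * ξ)))
  refine ⟨fun θ => (htot θ).differentiableAt, ?_⟩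
  intro θ h0
  have hfd : fderiv ℝ (fun θ' =>
      (∫ ν, F (θ' + ξ • ν) ∂(ballUniform n)) + 1 / (2 * ξ) * Metric.infDist θ' Θ ^ 2) θ
      = (∫ ν, fderiv ℝ F (θ + ξ • ν) ∂(ballUniform n)) +
          (1 / (2 * ξ)) • ((InnerProductSpace.toDual ℝ (EuclideanSpace ℝ (Fin n)))
            ((2:ℝ) • (θ - proj θ))) := (htot θ).fderiv
  have hzero : (∫ ν, fderiv ℝ F (θ + ξ • ν) ∂(ballUniform n)) +
      (1 / (2 * ξ)) • ((InnerProductSpace.toDual ℝ (EuclideanSpace ℝ (Fin n)))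
        ((2:ℝ) • (θ - proj θ))) = 0 := by
    rw [← hfd]
    have h1 := congrArg (InnerProductSpace.toDual ℝ (EuclideanSpace ℝ (Fin n))) h0
    simpa [gradient] using h1
  -- norm computation
  have heq : (∫ ν, fderiv ℝ F (θ + ξ • ν) ∂(ballUniform n))
      = -((1 / (2 * ξ)) • ((InnerProductSpace.toDual ℝ (EuclideanSpace ℝ (Fin n)))
        ((2:ℝ) • (θ - proj θ)))) := by
    rw [eq_neg_iff_add_eq_zero]
    exact hzero
  have hnorm1 : ‖∫ ν, fderiv ℝ F (θ + ξ • ν) ∂(ballUniform n)‖ ≤ M :=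
    (hasFDerivAt_smoothed hM hLip hξ θ).2
  have hnorm2 : ‖θ - proj θ‖ / ξ ≤ M := by
    have : ‖-((1 / (2 * ξ)) • ((InnerProductSpace.toDual ℝ (EuclideanSpace ℝ (Fin n)))
        ((2:ℝ) • (θ - proj θ))))‖ = ‖θ - proj θ‖ / ξ := by
      rw [norm_neg, norm_smul, LinearIsometryEquiv.norm_map, norm_smul]
      simp [Real.norm_eq_abs, abs_of_pos hξ]
      field_simp
    rw [heq, this] at hnorm1
    exact hnorm1
  have hbase : ‖θ - proj θ‖ ≤ ξ * M := by
    rw [div_le_iff₀ hξ] at hnorm2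
    linarith [hnorm2]
  rcases Nat.eq_zero_or_pos n with hn | hn
  · subst hn
    haveI : Subsingleton (EuclideanSpace ℝ (Fin 0)) :=
      inferInstanceAs (Subsingleton (PiLp 2 fun _ : Fin 0 => ℝ))
    rw [Subsingleton.elim (proj θ) θ, sub_self, norm_zero]
    positivity
  · have h1n : (1 : ℝ) ≤ n := by exact_mod_cast hn
    calc ‖θ - proj θ‖ ≤ ξ * M := hbase
      _ ≤ ξ * n * M := by
        nlinarith [mul_nonneg (mul_nonneg hξ.le hM) (sub_nonneg.mpr h1n)]
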